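/- Let α, β be distinct positive integers and let A be the 2×3 integer matrix with rows (α, −β, 0) and (0, α, −β). Then for every n, Breaker wins the (A,0)-game on [n], i.e. Breaker has a winning strategy in the deterministic (non-random, non-biased) game on the full board [n]. -/

import Mathlib

variable {V : Type*} [DecidableEq V]

/-- Maker has a winning strategy in the Maker-Breaker game, given whose turn it is
(`true` = Maker to move), the remaining unclaimed board `R`, and Maker's current set `M`.
Maker wins if at the end of the game (all elements claimed) her set satisfies `win`. -/
def makerWinsAux (win : Finset V → Prop) : Bool → Finset V → Finset V → Prop
  | true, R, M =>
      if R.Nonempty then ∃ x, ∃ _h : x ∈ R, makerWinsAux win false (R.erase x) (insert x M)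
      else win M
  | false, R, M =>
      if R.Nonempty then ∀ x, x ∈ R → makerWinsAux win true (R.erase x) M
      else win M
termination_by _ R _ => R.card
decreasing_by
  · exact Finset.card_erase_lt_of_mem ‹x ∈ R›
  · exact Finset.card_erase_lt_of_mem ‹x ∈ R›

/-- Breaker has a winning strategy (Maker moves first). -/
def breakerWinsAux (win : Finset V → Prop) : Bool → Finset V → Finset V → Prop
  | true, R, M =>
      if R.Nonempty then ∀ x, x ∈ R → breakerWinsAux win false (R.erase x) (insert x M)
      else ¬ win M
  | false, R, M =>
      if R.Nonempty then ∃ x, ∃ _h : x ∈ R, breakerWinsAux win true (R.erase x) M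
      else ¬ win M
termination_by _ R _ => R.card
decreasing_by
  · exact Finset.card_erase_lt_of_mem ‹x ∈ R›
  · exact Finset.card_erase_lt_of_mem ‹x ∈ R›

/-- Maker wins the Maker-Breaker game on board `X` with winning condition `win`. -/
def MakerWins (win : Finset V → Prop) (X : Finset V) : Prop := makerWinsAux win true X ∅

/-- Breaker wins the Maker-Breaker game on board `X` with winning condition `win`. -/
def BreakerWins (win : Finset V → Prop) (X : Finset V) : Prop := breakerWinsAux win true X ∅

/-- Maker's winning condition in the `(A,b)`-game: her claimed set `M` contains all entries of
some `k`-distinct solution (in positive integers) of `A x = b`. -/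
def RadoWin {l k : ℕ} (A : Matrix (Fin l) (Fin k) ℤ) (b : Fin l → ℤ) (M : Finset ℕ) : Prop :=
  ∃ x : Fin k → ℕ, Function.Injective x ∧ (∀ i, x i ∈ M) ∧
    A.mulVec (fun i => (x i : ℤ)) = b

/-- The pair `(A,b)` is irredundant: `A x = b` has a `k`-distinct solution in positive integers. -/
def PairIrredundant {l k : ℕ} (A : Matrix (Fin l) (Fin k) ℤ) (b : Fin l → ℤ) : Prop :=
  ∃ x : Fin k → ℕ, Function.Injective x ∧ (∀ i, 0 < x i) ∧
    A.mulVec (fun i => (x i : ℤ)) = b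

/-- The matrix `A` is irredundant: `A x = 0` has a `k`-distinct solution in positive integers. -/
def MatIrredundant {l k : ℕ} (A : Matrix (Fin l) (Fin k) ℤ) : Prop :=
  PairIrredundant A 0

/-- Property (*): no rational linear combination of the rows of `A` has exactly two
nonzero entries. -/
def PropertyStar {l k : ℕ} (A : Matrix (Fin l) (Fin k) ℤ) : Prop :=
  ∀ c : Fin l → ℚ,
    (Finset.univ.filter fun j : Fin k => (∑ i, c i * (A i j : ℚ)) ≠ 0).card ≠ 2

/-- The rank (over `ℚ`) of an integer matrix. -/
noncomputable def rankQ {l k : ℕ} (A : Matrix (Fin l) (Fin k) ℤ) : ℕ :=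
  (A.map (Int.cast : ℤ → ℚ)).rank

/-- The rank (over `ℚ`) of the matrix `A_{W̄}` formed by the columns of `A` indexed by the
complement of `W`. -/
noncomputable def rankRestrict {l k : ℕ} (A : Matrix (Fin l) (Fin k) ℤ)
    (W : Finset (Fin k)) : ℕ :=
  ((A.map (Int.cast : ℤ → ℚ)).submatrix id (fun j : {j : Fin k // j ∈ Wᶜ} => j.1)).rank

/-- The parameter `m(A)`. -/
noncomputable def mIndex {l k : ℕ} (A : Matrix (Fin l) (Fin k) ℤ) : ℝ :=
  sSup {x : ℝ | ∃ W : Finset (Fin k), 2 ≤ W.card ∧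
    x = ((W.card : ℝ) - 1) / (((W.card : ℝ) - 1) + (rankRestrict A W : ℝ) - (rankQ A : ℝ))}

/-- `A` (an `ℓ×k` matrix of full rank `ℓ`) is strictly balanced. -/
def StrictlyBalanced {l k : ℕ} (A : Matrix (Fin l) (Fin k) ℤ) : Prop :=
  ∀ W : Finset (Fin k), 2 ≤ W.card → W.card < k →
    ((W.card : ℝ) - 1) / (((W.card : ℝ) - 1) + (rankRestrict A W : ℝ) - (l : ℝ))
      < ((k : ℝ) - 1) / ((k : ℝ) - 1 - (l : ℝ))

open Classical in
/-- `μ(n,A,b)`: the maximum size of a subset of `[n] = {1,…,n}` containing no `k`-distinct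
solution to `A x = b`. -/
noncomputable def muMax {l k : ℕ} (n : ℕ) (A : Matrix (Fin l) (Fin k) ℤ) (b : Fin l → ℤ) : ℕ :=
  (((Finset.Icc 1 n).powerset.filter fun S => ¬ RadoWin A b S).sup Finset.card)

open Classical in
/-- The probability that the random subset `[n]_p` (each element of `{1,…,n}` included
independently with probability `p`) satisfies the property `P`. -/
noncomputable def probRandomSubset (n : ℕ) (p : ℝ) (P : Finset ℕ → Prop) : ℝ :=
  ∑ S ∈ (Finset.Icc 1 n).powerset,
    if P S then p ^ S.card * (1 - p) ^ (n - S.card) else 0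

/-- Maker wins the `(A,b)`-game on the board `X` (Maker moves first). -/
def MakerWinsRado {l k : ℕ} (A : Matrix (Fin l) (Fin k) ℤ) (b : Fin l → ℤ)
    (X : Finset ℕ) : Prop :=
  MakerWins (RadoWin A b) X

/-- Breaker wins the `(A,b)`-game on the board `X` (Maker moves first). -/
def BreakerWinsRado {l k : ℕ} (A : Matrix (Fin l) (Fin k) ℤ) (b : Fin l → ℤ)
    (X : Finset ℕ) : Prop :=
  BreakerWins (RadoWin A b) X

/-! ### Auxiliary development -/

/-- `a`-adic valuation: the number of times `a ≥ 2` divides `x ≠ 0` (junk value `0` otherwise). -/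
def gpVa (a : ℕ) : ℕ → ℕ
  | x => if h : 2 ≤ a ∧ x ≠ 0 ∧ a ∣ x then
      have : x / a < x := Nat.div_lt_self (Nat.pos_of_ne_zero h.2.1) (by omega)
      gpVa a (x / a) + 1
    else 0

theorem gpVa_eq (a x : ℕ) :
    gpVa a x = if 2 ≤ a ∧ x ≠ 0 ∧ a ∣ x then gpVa a (x / a) + 1 else 0 := by
  rw [gpVa]; split <;> simp_all

theorem gpVa_mul_self (a y : ℕ) (ha : 2 ≤ a) (hy : y ≠ 0) :
    gpVa a (y * a) = gpVa a y + 1 := by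
  rw [gpVa_eq (x := y * a)]
  have h1 : y * a ≠ 0 := by positivity
  have h2 : a ∣ y * a := ⟨y, Nat.mul_comm y a⟩
  rw [if_pos ⟨ha, h1, h2⟩, Nat.mul_div_cancel _ (by omega)]

theorem gpVa_mul_coprime (a b : ℕ) (ha : 2 ≤ a) (hb : 0 < b) (hcop : Nat.Coprime a b) :
    ∀ y, gpVa a (y * b) = gpVa a y := by
  intro y
  induction y using Nat.strong_induction_on with
  | _ y ih =>
    rcases eq_or_ne y 0 with rfl | hy
    · simp
    by_cases hd : a ∣ y
    · have hd' : a ∣ y * b := hd.mul_right b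
      rw [gpVa_eq (x := y * b), gpVa_eq (x := y),
        if_pos ⟨ha, by positivity, hd'⟩, if_pos ⟨ha, hy, hd⟩]
      obtain ⟨c, rfl⟩ := hd
      have hA : a * c * b = a * (c * b) := by ring
      rw [hA, Nat.mul_div_cancel_left _ (by omega : 0 < a),
        Nat.mul_div_cancel_left _ (by omega : 0 < a)]
      have hc0 : 0 < c := by
        rcases Nat.eq_zero_or_pos c with rfl | h
        · simp [Nat.mul_comm] at hy
        · exact h
      have hcy : c < a * c := by
        calc c = 1 * c := (Nat.one_mul c).symm
        _ < a * c := by exact Nat.mul_lt_mul_of_lt_of_le (by omega) (le_refl c) hc0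
      exact congrArg (· + 1) (ih c hcy)
    · have hd' : ¬ a ∣ y * b := fun h => hd (hcop.dvd_of_dvd_mul_right h)
      rw [gpVa_eq (x := y * b), gpVa_eq (x := y), if_neg (by tauto), if_neg (by tauto)]

theorem gpVa_dvd_of_ne_zero (a x : ℕ) (h : gpVa a x ≠ 0) : a ∣ x ∧ x ≠ 0 := by
  rw [gpVa_eq] at h
  by_cases hc : 2 ≤ a ∧ x ≠ 0 ∧ a ∣ x
  · exact ⟨hc.2.2, hc.2.1⟩
  · rw [if_neg hc] at h; omega

/-- The pairing map used by Breaker. -/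
def gpSigma (a b : ℕ) (x : ℕ) : ℕ :=
  if gpVa a x % 2 = 0 then (if b ∣ x then x / b * a else x) else x / a * b

theorem gpSigma_even_dvd (a b x : ℕ) (hpar : gpVa a x % 2 = 0) (hd : b ∣ x) :
    gpSigma a b x = x / b * a := by rw [gpSigma, if_pos hpar, if_pos hd]

theorem gpSigma_even_ndvd (a b x : ℕ) (hpar : gpVa a x % 2 = 0) (hd : ¬ b ∣ x) :
    gpSigma a b x = x := by rw [gpSigma, if_pos hpar, if_neg hd]

theorem gpSigma_odd (a b x : ℕ) (hpar : ¬ gpVa a x % 2 = 0) :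
    gpSigma a b x = x / a * b := by rw [gpSigma, if_neg hpar]

theorem gpSigma_invol (a b : ℕ) (ha : 2 ≤ a) (hb : 0 < b) (hcop : Nat.Coprime a b) (x : ℕ) :
    gpSigma a b (gpSigma a b x) = x := by
  by_cases hpar : gpVa a x % 2 = 0
  · by_cases hd : b ∣ x
    · rcases eq_or_ne x 0 with rfl | hx
      · simp [gpSigma]
      obtain ⟨c, rfl⟩ := hd
      have hc : c ≠ 0 := by rintro rfl; simp at hx
      have hvbc : gpVa a (b * c) = gpVa a c := by
        rw [Nat.mul_comm]; exact gpVa_mul_coprime a b ha hb hcop c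
      have hdiv : b * c / b = c := Nat.mul_div_cancel_left _ hb
      have hv2 : gpVa a (c * a) = gpVa a c + 1 := gpVa_mul_self a c ha hc
      have hpar' : ¬ gpVa a (c * a) % 2 = 0 := by rw [hv2]; rw [hvbc] at hpar; omega
      rw [gpSigma_even_dvd a b _ hpar ⟨c, rfl⟩, hdiv, gpSigma_odd a b _ hpar',
        Nat.mul_div_cancel _ (by omega : 0 < a), Nat.mul_comm]
    · rw [gpSigma_even_ndvd a b x hpar hd, gpSigma_even_ndvd a b x hpar hd]
  · obtain ⟨⟨c, rfl⟩, hx⟩ := gpVa_dvd_of_ne_zero a x (by omega)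
    have hc : c ≠ 0 := by rintro rfl; simp at hx
    have hv : gpVa a (a * c) = gpVa a c + 1 := by
      rw [Nat.mul_comm]; exact gpVa_mul_self a c ha hc
    have hvcb : gpVa a (c * b) = gpVa a c := gpVa_mul_coprime a b ha hb hcop c
    have hdiv : a * c / a = c := Nat.mul_div_cancel_left _ (by omega)
    rw [gpSigma_odd a b _ hpar, hdiv,
      gpSigma_even_dvd a b _ (by rw [hvcb]; rw [hv] at hpar; omega) ⟨c, Nat.mul_comm c b⟩,
      Nat.mul_div_cancel _ hb, Nat.mul_comm]

theorem gpSigma_triple (a b : ℕ) (hb : 0 < b) (hab : b < a) (hcop : Nat.Coprime a b)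
    (x₀ x₁ x₂ : ℕ) (h0 : 0 < x₀) (e1 : a * x₀ = b * x₁) (e2 : a * x₁ = b * x₂) :
    gpSigma a b x₀ = x₁ ∨ gpSigma a b x₁ = x₂ := by
  have ha : 2 ≤ a := by omega
  have hd0 : b ∣ x₀ := hcop.symm.dvd_of_dvd_mul_left ⟨x₁, e1⟩
  obtain ⟨c, rfl⟩ := hd0
  have hc : c ≠ 0 := by rintro rfl; simp at h0
  have hx1 : x₁ = c * a := by
    have h : b * (c * a) = b * x₁ := by rw [← e1]; ring
    exact (Nat.eq_of_mul_eq_mul_left hb h).symm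
  subst hx1
  have hd1 : b ∣ c * a := hcop.symm.dvd_of_dvd_mul_left ⟨x₂, e2⟩
  have hx2 : x₂ = c * a / b * a := by
    obtain ⟨d, hd⟩ := hd1
    have h : b * (d * a) = b * x₂ := by rw [← e2, hd]; ring
    rw [hd, Nat.mul_div_cancel_left _ hb]
    exact (Nat.eq_of_mul_eq_mul_left hb h).symm
  have hv0 : gpVa a (b * c) = gpVa a c := by
    rw [Nat.mul_comm]; exact gpVa_mul_coprime a b ha hb hcop c
  have hv1 : gpVa a (c * a) = gpVa a c + 1 := gpVa_mul_self a c ha hc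
  by_cases hpar : gpVa a c % 2 = 0
  · left
    rw [gpSigma_even_dvd a b _ (by omega) ⟨c, rfl⟩,
      Nat.mul_div_cancel_left _ hb]
  · right
    rw [gpSigma_even_dvd a b _ (by omega) hd1, hx2]

/-- Pairing-strategy invariant. -/
def gpInv {V : Type*} [DecidableEq V] (σ : V → V) (R M : Finset V) : Prop :=
  ∀ u ∈ M, σ u = u ∨ (σ u ∉ M ∧ σ u ∉ R)

theorem gpInv_no_win {V : Type*} [DecidableEq V] (σ : V → V) (M : Finset V)
    (hM : gpInv σ ∅ M) (win : Finset V → Prop)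
    (hwin : ∀ N : Finset V, win N → ∃ u ∈ N, σ u ∈ N ∧ σ u ≠ u) : ¬ win M := by
  intro hw
  obtain ⟨u, hu, hσu, hne⟩ := hwin M hw
  rcases hM u hu with h | ⟨h1, -⟩
  · exact hne h
  · exact h1 hσu

theorem breaker_pairing_aux {V : Type*} [DecidableEq V] (win : Finset V → Prop) (σ : V → V)
    (hσ : ∀ x, σ (σ x) = x)
    (hwin : ∀ N : Finset V, win N → ∃ u ∈ N, σ u ∈ N ∧ σ u ≠ u) :
    ∀ n : ℕ, ∀ R M : Finset V, R.card ≤ n → gpInv σ R M → breakerWinsAux win true R M := by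
  intro n
  induction n with
  | zero =>
    intro R M hcard hinv
    have hR : R = ∅ := Finset.card_eq_zero.mp (Nat.le_zero.mp hcard)
    subst hR
    rw [breakerWinsAux, if_neg (by simp)]
    exact gpInv_no_win σ M hinv win hwin
  | succ n ih =>
    intro R M hcard hinv
    rcases R.eq_empty_or_nonempty with rfl | hR
    · rw [breakerWinsAux, if_neg (by simp)]
      exact gpInv_no_win σ M hinv win hwin
    rw [breakerWinsAux, if_pos hR]
    intro x hx
    have hgood : σ x = x ∨ σ x ∉ M := by
      by_cases hfix : σ x = x
      · exact Or.inl hfix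
      · refine Or.inr fun hmem => ?_
        rcases hinv (σ x) hmem with h | ⟨-, h2⟩
        · exact hfix (by rw [hσ x] at h; exact h.symm)
        · rw [hσ x] at h2; exact h2 hx
    -- old elements of M keep the invariant for any sub-board of `R.erase x`
    have hold : ∀ S : Finset V, S ⊆ R.erase x → ∀ u ∈ M,
        σ u = u ∨ (σ u ∉ insert x M ∧ σ u ∉ S) := by
      intro S hS u hu
      rcases hinv u hu with h | ⟨h1, h2⟩
      · exact Or.inl h
      · refine Or.inr ⟨?_, fun hmem => h2 (Finset.erase_subset x R (hS hmem))⟩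
        intro hmem
        rcases Finset.mem_insert.mp hmem with h | h
        · exact h2 (h ▸ hx)
        · exact h1 h
    rw [breakerWinsAux]
    rcases (R.erase x).eq_empty_or_nonempty with hRe | hRe
    · rw [hRe, if_neg (by simp)]
      refine gpInv_no_win σ _ ?_ win hwin
      intro u hu
      rcases Finset.mem_insert.mp hu with rfl | hu'
      · rcases hgood with h | h
        · exact Or.inl h
        · by_cases hfix : σ u = u
          · exact Or.inl hfix
          · refine Or.inr ⟨fun hmem => ?_, by simp⟩
            rcases Finset.mem_insert.mp hmem with h' | h'
            · exact hfix h'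
            · exact h h'
      · simpa using hold ∅ (by simp) u hu'
    · rw [if_pos hRe]
      by_cases hsx : σ x ∈ R.erase x
      · refine ⟨σ x, hsx, ?_⟩
        refine ih _ _ ?_ ?_
        · have h1 := Finset.card_erase_lt_of_mem hx
          have h2 := Finset.card_erase_le (s := R.erase x) (a := σ x)
          omega
        · intro u hu
          rcases Finset.mem_insert.mp hu with rfl | hu'
          · have hfix : σ u ≠ u := (Finset.mem_erase.mp hsx).1
            refine Or.inr ⟨fun hmem => ?_, by simp⟩
            rcases Finset.mem_insert.mp hmem with h' | h'
            · exact hfix h'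
            · rcases hgood with h | h
              · exact hfix h
              · exact h h'
          · exact hold _ (Finset.erase_subset _ _) u hu'
      · obtain ⟨y, hy⟩ := hRe
        refine ⟨y, hy, ?_⟩
        refine ih _ _ ?_ ?_
        · have h1 := Finset.card_erase_lt_of_mem hx
          have h2 := Finset.card_erase_le (s := R.erase x) (a := y)
          omega
        · intro u hu
          rcases Finset.mem_insert.mp hu with rfl | hu'
          · by_cases hfix : σ u = u
            · exact Or.inl hfix
            · rcases hgood with h | h
              · exact absurd h hfix
              · refine Or.inr ⟨fun hmem => ?_, fun hmem => hsx (Finset.mem_of_mem_erase hmem)⟩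
                rcases Finset.mem_insert.mp hmem with h' | h'
                · exact hfix h'
                · exact h h'
          · exact hold _ (Finset.erase_subset _ _) u hu'

theorem breaker_pairing {V : Type*} [DecidableEq V] (win : Finset V → Prop) (σ : V → V)
    (hσ : ∀ x, σ (σ x) = x)
    (hwin : ∀ N : Finset V, win N → ∃ u ∈ N, σ u ∈ N ∧ σ u ≠ u) (X : Finset V) :
    BreakerWins win X :=
  breaker_pairing_aux win σ hσ hwin X.card X ∅ le_rfl (by intro u hu; simp at hu)

/-- Theorem 4.1(iii) of the paper. For distinct positive integers `α, β`
and the `2×3` matrix with rows `(α, -β, 0)` and `(0, α, -β)`, Breaker wins the `(A,0)`-game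
on the full board `[n]` for every `n`. -/
theorem gp_pair_exists (a b : ℕ) (hb : 0 < b) (hab : b < a) (hcop : Nat.Coprime a b)
    (N : Finset ℕ) (x₀ x₁ x₂ : ℕ) (h0 : x₀ ∈ N) (h1 : x₁ ∈ N) (h2 : x₂ ∈ N)
    (hne01 : x₀ ≠ x₁) (hne12 : x₁ ≠ x₂) (hpos : 0 < x₀)
    (e1 : a * x₀ = b * x₁) (e2 : a * x₁ = b * x₂) :
    ∃ u ∈ N, gpSigma a b u ∈ N ∧ gpSigma a b u ≠ u := by
  rcases gpSigma_triple a b hb hab hcop x₀ x₁ x₂ hpos e1 e2 with h | h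
  · exact ⟨x₀, h0, h ▸ h1, h ▸ hne01.symm⟩
  · exact ⟨x₁, h1, h ▸ h2, h ▸ hne12.symm⟩

theorem geometric_progression_breaker_win (α β : ℤ) (hα : 0 < α) (hβ : 0 < β)
    (hne : α ≠ β) (n : ℕ) :
    BreakerWinsRado (Matrix.of ![![α, -β, 0], ![0, α, -β]]) (fun _ => (0 : ℤ))
      (Finset.Icc 1 n) := by
  set A := α.toNat with hAdef
  set B := β.toNat with hBdef
  have hA : (A : ℤ) = α := Int.toNat_of_nonneg hα.le
  have hB : (B : ℤ) = β := Int.toNat_of_nonneg hβ.le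
  have hApos : 0 < A := by omega
  have hBpos : 0 < B := by omega
  set g := Nat.gcd A B with hgdef
  have hg : 0 < g := Nat.gcd_pos_of_pos_left B hApos
  set a0 := A / g with ha0def
  set b0 := B / g with hb0def
  have hAg : g * a0 = A := Nat.mul_div_cancel' (Nat.gcd_dvd_left A B) 
  have hBg : g * b0 = B := Nat.mul_div_cancel' (Nat.gcd_dvd_right A B)
  have hcop : Nat.Coprime a0 b0 := Nat.coprime_div_gcd_div_gcd hg
  have ha0pos : 0 < a0 := by
    rcases Nat.eq_zero_or_pos a0 with h | h
    · rw [h, Nat.mul_zero] at hAg; omega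
    · exact h
  have hb0pos : 0 < b0 := by
    rcases Nat.eq_zero_or_pos b0 with h | h
    · rw [h, Nat.mul_zero] at hBg; omega
    · exact h
  have hne0 : a0 ≠ b0 := by
    intro h
    apply hne
    rw [← hA, ← hB, ← hAg, ← hBg, h]
  -- extract the natural-number equations from a winning set
  have hextract : ∀ N : Finset ℕ,
      RadoWin (Matrix.of ![![α, -β, 0], ![0, α, -β]]) (fun _ => (0 : ℤ)) N →
      ∃ x₀ x₁ x₂ : ℕ, x₀ ∈ N ∧ x₁ ∈ N ∧ x₂ ∈ N ∧ x₀ ≠ x₁ ∧ x₁ ≠ x₂ ∧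
        a0 * x₀ = b0 * x₁ ∧ a0 * x₁ = b0 * x₂ := by
    intro N hwin
    obtain ⟨x, hinj, hmem, hmul⟩ := hwin
    have h0 := congrFun hmul 0
    have h1 := congrFun hmul 1
    simp [Matrix.mulVec, dotProduct, Fin.sum_univ_three] at h0 h1
    have e1 : (α : ℤ) * (x 0 : ℤ) = β * (x 1 : ℤ) := by linarith
    have e2 : (α : ℤ) * (x 1 : ℤ) = β * (x 2 : ℤ) := by linarith
    have e1N : A * x 0 = B * x 1 := by
      have : ((A * x 0 : ℕ) : ℤ) = ((B * x 1 : ℕ) : ℤ) := by push_cast; rw [hA, hB]; exact e1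
      exact_mod_cast this
    have e2N : A * x 1 = B * x 2 := by
      have : ((A * x 1 : ℕ) : ℤ) = ((B * x 2 : ℕ) : ℤ) := by push_cast; rw [hA, hB]; exact e2
      exact_mod_cast this
    have e1g : a0 * x 0 = b0 * x 1 := by
      apply Nat.eq_of_mul_eq_mul_left hg
      rw [← Nat.mul_assoc, ← Nat.mul_assoc, hAg, hBg]; exact e1N
    have e2g : a0 * x 1 = b0 * x 2 := by
      apply Nat.eq_of_mul_eq_mul_left hg
      rw [← Nat.mul_assoc, ← Nat.mul_assoc, hAg, hBg]; exact e2N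
    exact ⟨x 0, x 1, x 2, hmem 0, hmem 1, hmem 2,
      fun h => absurd (hinj h) (by decide), fun h => absurd (hinj h) (by decide), e1g, e2g⟩
  rcases Nat.lt_or_ge b0 a0 with hord | hord
  · -- a0 > b0 : use the pairing for ratio a0 / b0
    apply breaker_pairing _ (gpSigma a0 b0)
      (gpSigma_invol a0 b0 (by omega) hb0pos hcop)
    intro N hwin
    obtain ⟨x₀, x₁, x₂, h0, h1, h2, hne01, hne12, e1, e2⟩ := hextract N hwin
    have hpos : 0 < x₀ := by
      rcases Nat.eq_zero_or_pos x₀ with rfl | h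
      · exfalso
        have : x₁ = 0 := by
          have := e1; rw [Nat.mul_zero] at this
          exact Nat.mul_eq_zero.mp this.symm |>.resolve_left (by omega)
        exact hne01 this.symm
      · exact h
    exact gp_pair_exists a0 b0 hb0pos hord hcop N x₀ x₁ x₂ h0 h1 h2 hne01 hne12 hpos e1 e2
  · -- b0 > a0 : reverse the roles
    have hord' : a0 < b0 := by omega
    apply breaker_pairing _ (gpSigma b0 a0)
      (gpSigma_invol b0 a0 (by omega) ha0pos hcop.symm)
    intro N hwin
    obtain ⟨x₀, x₁, x₂, h0, h1, h2, hne01, hne12, e1, e2⟩ := hextract N hwin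
    have hpos : 0 < x₂ := by
      rcases Nat.eq_zero_or_pos x₂ with rfl | h
      · exfalso
        have : x₁ = 0 := by
          have := e2; rw [Nat.mul_zero] at this
          exact Nat.mul_eq_zero.mp this |>.resolve_left (by omega)
        exact hne12 this
      · exact h
    exact gp_pair_exists b0 a0 ha0pos hord' hcop.symm N x₂ x₁ x₀ h2 h1 h0
      (fun h => hne12 h.symm) (fun h => hne01 h.symm) hpos e2.symm e1.symm
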